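/- Summability of the diagonalizer increments: let ε, ε' ∈ (0, 1], let ξ ∈ (0, π) with sin ξ ≥ ε, let λ ∈ (0, π) with cos λ = ρ_∞·cos ξ, let r ∈ ℕ, and let ζ : ℤ → ℝ be such that for all x with |x| ≥ r one has ζ(x) ∈ (0, π), ρ(x)·cos ζ(x) = cos λ and sin ζ(x) ≥ ε'. For |x| ≥ r define the 2×2 complex matrix P(x) = [[α(x), α(x)], [ρ(x)·e^{iζ(x)} − e^{iλ}, ρ(x)·e^{−iζ(x)} − e^{iλ}]]. Then det P(x) = −2i·α(x)·ρ(x)·sin ζ(x) ≠ 0 for all |x| ≥ r, and there exists M > 0 (which may depend on ε, ε', λ and α) such that ∑_{x ≥ r} ‖P(x+1)⁻¹·P(x) − I‖ + ∑_{x ≤ −r−1} ‖P(x+1)⁻¹·P(x) − I‖ ≤ M·∑_{x ∈ ℤ} |α(x+1) − α(x)| < ∞, where ‖·‖ is the operator norm on 2×2 complex matrices. -/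

import Mathlib

open Complex Filter

/-- The operator norm of a `2 × 2` complex matrix, viewed as a linear map on `ℂ²`. -/
noncomputable def matOpNorm (M : Matrix (Fin 2) (Fin 2) ℂ) : ℝ :=
  ‖LinearMap.toContinuousLinearMap M.mulVecLin‖

lemma matOpNorm_le_sum (M : Matrix (Fin 2) (Fin 2) ℂ) :
    matOpNorm M ≤ ‖M 0 0‖ + ‖M 0 1‖ + ‖M 1 0‖ + ‖M 1 1‖ := by
  have hC : (0:ℝ) ≤ ‖M 0 0‖ + ‖M 0 1‖ + ‖M 1 0‖ + ‖M 1 1‖ := by positivity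
  refine ContinuousLinearMap.opNorm_le_bound _ hC (fun v => ?_)
  rw [pi_norm_le_iff_of_nonneg (by positivity)]
  intro i
  have hv : ∀ j : Fin 2, ‖v j‖ ≤ ‖v‖ := fun j => norm_le_pi_norm v j
  have h1 : (LinearMap.toContinuousLinearMap M.mulVecLin) v i = M i 0 * v 0 + M i 1 * v 1 := by
    simp [Matrix.mulVecLin, Matrix.mulVec, dotProduct, Fin.sum_univ_two]
  rw [h1]
  have h2 : ‖M i 0 * v 0 + M i 1 * v 1‖ ≤ ‖M i 0‖ * ‖v‖ + ‖M i 1‖ * ‖v‖ := by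
    refine (norm_add_le _ _).trans ?_
    rw [norm_mul, norm_mul]
    gcongr <;> [exact hv 0; exact hv 1]
  refine h2.trans ?_
  have hvn : (0:ℝ) ≤ ‖v‖ := norm_nonneg v
  have h3 : ‖M i 0‖ + ‖M i 1‖ ≤ ‖M 0 0‖ + ‖M 0 1‖ + ‖M 1 0‖ + ‖M 1 1‖ := by
    fin_cases i <;> beta_reduce <;> simp only [Fin.zero_eta, Fin.mk_one]
    · nlinarith [norm_nonneg (M 1 0), norm_nonneg (M 1 1)]
    · nlinarith [norm_nonneg (M 0 0), norm_nonneg (M 0 1)]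
  nlinarith [mul_le_mul_of_nonneg_right h3 hvn]

lemma matOpNorm_nonneg (M : Matrix (Fin 2) (Fin 2) ℂ) : 0 ≤ matOpNorm M := norm_nonneg _

noncomputable def Pm (lam : ℝ) (a : ℂ) (t : ℝ) : Matrix (Fin 2) (Fin 2) ℂ :=
  !![a, a;
     ((Real.cos lam : ℂ) - Complex.exp (Complex.I * lam)) + Complex.I * t,
     ((Real.cos lam : ℂ) - Complex.exp (Complex.I * lam)) - Complex.I * t]

lemma det_Pm (lam : ℝ) (a : ℂ) (t : ℝ) : (Pm lam a t).det = -2 * Complex.I * a * t := by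
  simp [Pm, Matrix.det_fin_two_of]; ring

lemma Pm_inv (lam : ℝ) (a : ℂ) (t : ℝ) :
    (Pm lam a t)⁻¹ = (-2 * Complex.I * a * t)⁻¹ •
      !![((Real.cos lam : ℂ) - Complex.exp (Complex.I * lam)) - Complex.I * t, -a;
         -(((Real.cos lam : ℂ) - Complex.exp (Complex.I * lam)) + Complex.I * t), a] := by
  rw [Matrix.inv_def, det_Pm, Ring.inverse_eq_inv]
  congr 1
  rw [show Pm lam a t = !![a, a;
     ((Real.cos lam : ℂ) - Complex.exp (Complex.I * lam)) + Complex.I * t,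
     ((Real.cos lam : ℂ) - Complex.exp (Complex.I * lam)) - Complex.I * t] from rfl,
    Matrix.adjugate_fin_two]
  simp

lemma norm_w_le (lam : ℝ) : ‖(Real.cos lam : ℂ) - Complex.exp (Complex.I * lam)‖ ≤ 2 := by
  refine (norm_sub_le _ _).trans ?_
  have h1 : ‖(Real.cos lam : ℂ)‖ ≤ 1 := by
    rw [Complex.norm_real]; exact abs_le.mpr ⟨Real.neg_one_le_cos lam, Real.cos_le_one lam⟩
  have h2 : ‖Complex.exp (Complex.I * lam)‖ = 1 := by
    rw [Complex.norm_exp]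
    simp
  linarith

lemma key_bound (lam : ℝ) (a a' : ℂ) (t t' : ℝ) (ha' : a' ≠ 0) (ht' : t' ≠ 0) :
    matOpNorm ((Pm lam a' t')⁻¹ * Pm lam a t - 1) ≤
      (2 / (‖a'‖ * |t'|)) * ((2 + |t'|) * ‖a - a'‖ + ‖a'‖ * |t - t'|) := by
  set w : ℂ := (Real.cos lam : ℂ) - Complex.exp (Complex.I * lam) with hw
  have hdet : (Pm lam a' t').det ≠ 0 := by
    rw [det_Pm]
    simp only [mul_ne_zero_iff]
    exact ⟨⟨⟨by norm_num, Complex.I_ne_zero⟩, ha'⟩, Complex.ofReal_ne_zero.mpr ht'⟩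
  have hre : (Pm lam a' t')⁻¹ * Pm lam a t - 1 = (Pm lam a' t')⁻¹ * (Pm lam a t - Pm lam a' t') := by
    rw [Matrix.mul_sub, Matrix.nonsing_inv_mul _ (Ne.isUnit hdet)]
  rw [hre, Pm_inv, Matrix.smul_mul]
  set c : ℂ := (-2 * Complex.I * a' * t')⁻¹ with hc
  set N : Matrix (Fin 2) (Fin 2) ℂ :=
    !![w - Complex.I * t', -a'; -(w + Complex.I * t'), a'] * (Pm lam a t - Pm lam a' t') with hN
  have hcnorm : ‖c‖ = (2 * (‖a'‖ * |t'|))⁻¹ := by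
    rw [hc, norm_inv]
    congr 1
    rw [norm_mul, norm_mul, norm_mul]
    simp [Complex.norm_real]
    ring
  have hB : ∀ i j, ‖N i j‖ ≤ (2 + |t'|) * ‖a - a'‖ + ‖a'‖ * |t - t'| := by
    intro i j
    have hD : Pm lam a t - Pm lam a' t' =
        !![a - a', a - a'; Complex.I * ((t:ℂ) - t'), -(Complex.I * ((t:ℂ) - t'))] := by
      rw [Pm, Pm]
      ext i j
      fin_cases i <;> fin_cases j <;> simp [hw] <;> ring
    have hwt : ‖w - Complex.I * t'‖ ≤ 2 + |t'| := by
      refine (norm_sub_le _ _).trans ?_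
      have := norm_w_le lam
      simp only [norm_mul, Complex.norm_I, one_mul, Complex.norm_real, Real.norm_eq_abs]
      linarith
    have hwt2 : ‖w + Complex.I * t'‖ ≤ 2 + |t'| := by
      refine (norm_add_le _ _).trans ?_
      have := norm_w_le lam
      simp only [norm_mul, Complex.norm_I, one_mul, Complex.norm_real, Real.norm_eq_abs]
      linarith
    have htt : ‖Complex.I * ((t:ℂ) - t')‖ = |t - t'| := by
      rw [norm_mul, Complex.norm_I, one_mul, ← Complex.ofReal_sub, Complex.norm_real,
        Real.norm_eq_abs]
    rw [hN, hD]
    fin_cases i <;> fin_cases j <;>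
      (simp only [Matrix.mul_apply, Fin.sum_univ_two, Fin.zero_eta, Fin.mk_one, Matrix.of_apply,
          Matrix.cons_val', Matrix.cons_val_zero,
          Matrix.cons_val_one, Matrix.head_cons, Matrix.head_fin_const, Matrix.empty_val',
          Matrix.cons_val_fin_one, Fin.isValue]
       refine (norm_add_le _ _).trans ?_
       rw [norm_mul, norm_mul]
       simp only [norm_neg, htt]
       nlinarith [norm_nonneg (a - a'), norm_nonneg a', abs_nonneg (t - t'), hwt, hwt2,
          abs_nonneg t', norm_nonneg (w - Complex.I * t'), norm_nonneg (w + Complex.I * t')])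
  have hfin : matOpNorm (c • N) ≤ ‖c‖ * (4 * ((2 + |t'|) * ‖a - a'‖ + ‖a'‖ * |t - t'|)) := by
    refine (matOpNorm_le_sum _).trans ?_
    simp only [Matrix.smul_apply, smul_eq_mul, norm_mul]
    linarith [mul_le_mul_of_nonneg_left (hB 0 0) (norm_nonneg c),
      mul_le_mul_of_nonneg_left (hB 0 1) (norm_nonneg c),
      mul_le_mul_of_nonneg_left (hB 1 0) (norm_nonneg c),
      mul_le_mul_of_nonneg_left (hB 1 1) (norm_nonneg c)]
  refine hfin.trans ?_
  rw [hcnorm]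
  have h1 : 0 < ‖a'‖ := norm_pos_iff.mpr ha'
  have h2 : 0 < |t'| := abs_pos.mpr ht'
  apply le_of_eq
  field_simp
  ring

lemma exists_lb (f : ℤ → ℝ) (hf : ∀ x, 0 < f x) (Lp Lm : ℝ) (hp : 0 < Lp) (hm : 0 < Lm)
    (ht : Tendsto f atTop (nhds Lp)) (hb : Tendsto f atBot (nhds Lm)) :
    ∃ c : ℝ, 0 < c ∧ ∀ x, c ≤ f x := by
  obtain ⟨N, hN⟩ := (eventually_atTop.mp (ht.eventually (eventually_gt_nhds (half_lt_self hp))))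
  obtain ⟨N', hN'⟩ := (eventually_atBot.mp (hb.eventually (eventually_gt_nhds (half_lt_self hm))))
  set S : Finset ℤ := insert N (Finset.Icc N' N) with hS
  have hSne : S.Nonempty := ⟨N, Finset.mem_insert_self _ _⟩
  set c0 : ℝ := S.inf' hSne f with hc0
  have hc0pos : 0 < c0 := by
    rw [hc0, Finset.lt_inf'_iff]
    exact fun b _ => hf b
  refine ⟨min (min (Lp / 2) (Lm / 2)) c0, by positivity, fun x => ?_⟩
  rcases le_or_gt N x with h | h
  · exact le_trans (min_le_left _ _) (le_trans (min_le_left _ _) (hN x h).le)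
  rcases le_or_gt x N' with h' | h'
  · exact le_trans (min_le_left _ _) (le_trans (min_le_right _ _) (hN' x h').le)
  · refine le_trans (min_le_right _ _) (Finset.inf'_le f ?_)
    exact Finset.mem_insert_of_mem (Finset.mem_Icc.mpr ⟨h'.le, h.le⟩)

lemma sq_diff_le (u v d : ℝ) (hu0 : 0 ≤ u) (hu1 : u ≤ 1) (hv0 : 0 ≤ v) (hv1 : v ≤ 1)
    (h : |u - v| ≤ d) : |u ^ 2 - v ^ 2| ≤ 2 * d := by
  have h5 := abs_le.mp h
  rw [abs_le]
  constructor <;> nlinarith [h5.1, h5.2]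

lemma t_diff (tmin t t' : ℝ) (h0 : 0 < tmin) (h1 : tmin ≤ t) (h2 : tmin ≤ t') (d : ℝ)
    (hd : |t ^ 2 - t' ^ 2| ≤ 2 * tmin * d) : |t - t'| ≤ d := by
  have habs : 0 ≤ |t ^ 2 - t' ^ 2| := abs_nonneg _
  have hd0 : 0 ≤ d := by nlinarith
  rw [abs_le] at hd ⊢
  constructor <;> nlinarith [hd.1, hd.2, hd0, mul_pos h0 h0]

set_option maxHeartbeats 1000000 in
/-- Summability of the diagonalizer increments: the diagonalizers
`P(x) = [[α(x), α(x)], [ρ(x)e^{iζ(x)} − e^{iλ}, ρ(x)e^{−iζ(x)} − e^{iλ}]]`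
are invertible near infinity and `∑ ‖P(x+1)⁻¹ P(x) − 1‖` is controlled by
`∑ |α(x+1) − α(x)| < ∞`. -/
theorem diagonalizer_increments_summable
    (α : ℤ → ℂ)
    (h01 : ∀ x : ℤ, 0 < ‖α x‖) (h02 : ∀ x : ℤ, ‖α x‖ < 1)
    (hsum : Summable fun x : ℤ => ‖α (x + 1) - α x‖)
    (αp αm : ℂ)
    (htop : Tendsto α atTop (nhds αp))
    (hbot : Tendsto α atBot (nhds αm))
    (hpm : ‖αp‖ = ‖αm‖) (h0p : 0 < ‖αp‖) (h1p : ‖αp‖ < 1)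
    (ρ : ℤ → ℝ) (hρ : ∀ x : ℤ, ρ x = Real.sqrt (1 - ‖α x‖ ^ 2))
    (ρinf : ℝ) (hρinf : ρinf = Real.sqrt (1 - ‖αp‖ ^ 2))
    (ε ε' : ℝ) (hε0 : 0 < ε) (hε1 : ε ≤ 1) (hε'0 : 0 < ε') (hε'1 : ε' ≤ 1)
    (ξ : ℝ) (hξ : ξ ∈ Set.Ioo 0 Real.pi) (hsin : ε ≤ Real.sin ξ)
    (lam : ℝ) (hlamI : lam ∈ Set.Ioo 0 Real.pi)
    (hlam : Real.cos lam = ρinf * Real.cos ξ)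
    (r : ℕ) (ζ : ℤ → ℝ)
    (hζ : ∀ x : ℤ, (r : ℤ) ≤ |x| →
      ζ x ∈ Set.Ioo 0 Real.pi ∧ ρ x * Real.cos (ζ x) = Real.cos lam ∧
        ε' ≤ Real.sin (ζ x))
    (P : ℤ → Matrix (Fin 2) (Fin 2) ℂ)
    (hP : ∀ x : ℤ, (r : ℤ) ≤ |x| →
      P x = Matrix.of
        ![![α x, α x],
          ![(ρ x : ℂ) * Complex.exp (Complex.I * (ζ x : ℂ)) - Complex.exp (Complex.I * (lam : ℂ)),
            (ρ x : ℂ) * Complex.exp (-(Complex.I * (ζ x : ℂ))) - Complex.exp (Complex.I * (lam : ℂ))]]) :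
    (∀ x : ℤ, (r : ℤ) ≤ |x| →
      (P x).det = -2 * Complex.I * α x * (ρ x : ℂ) * (Real.sin (ζ x) : ℂ) ∧ (P x).det ≠ 0) ∧
    ∃ M : ℝ, 0 < M ∧
      Summable (fun x : ℤ => if (r : ℤ) ≤ x then matOpNorm ((P (x + 1))⁻¹ * P x - 1) else 0) ∧
      Summable (fun x : ℤ => if x ≤ -(r : ℤ) - 1 then matOpNorm ((P (x + 1))⁻¹ * P x - 1) else 0) ∧
      (∑' x : ℤ, if (r : ℤ) ≤ x then matOpNorm ((P (x + 1))⁻¹ * P x - 1) else 0)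
          + (∑' x : ℤ, if x ≤ -(r : ℤ) - 1 then matOpNorm ((P (x + 1))⁻¹ * P x - 1) else 0)
        ≤ M * ∑' x : ℤ, ‖α (x + 1) - α x‖ := by
  -- basic positivity facts
  have hαnn : ∀ x : ℤ, (0:ℝ) ≤ ‖α x‖ := fun x => norm_nonneg _
  have hρpos : ∀ x : ℤ, 0 < ρ x := by
    intro x; rw [hρ x]
    apply Real.sqrt_pos.mpr
    nlinarith [h01 x, h02 x, hαnn x]
  have hρ1 : ∀ x : ℤ, ρ x ≤ 1 := by
    intro x; rw [hρ x]
    refine Real.sqrt_le_one.mpr ?_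
    nlinarith [h01 x, hαnn x]
  have hρsq : ∀ x : ℤ, (ρ x) ^ 2 = 1 - ‖α x‖ ^ 2 := by
    intro x; rw [hρ x]
    refine Real.sq_sqrt ?_
    nlinarith [h02 x, hαnn x]
  -- P equals the model matrix
  have hPm : ∀ x : ℤ, (r : ℤ) ≤ |x| → P x = Pm lam (α x) (ρ x * Real.sin (ζ x)) := by
    intro x hx
    obtain ⟨hmem, hcos, hsin'⟩ := hζ x hx
    have hcosC : (ρ x : ℂ) * Complex.cos ((ζ x : ℝ) : ℂ) = Complex.cos ((lam : ℝ) : ℂ) := by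
      rw [← Complex.ofReal_cos, ← Complex.ofReal_cos, ← Complex.ofReal_mul, hcos]
    have e1 : Complex.exp (Complex.I * (ζ x : ℂ))
        = Complex.cos ((ζ x : ℝ) : ℂ) + Complex.sin ((ζ x : ℝ) : ℂ) * Complex.I := by
      rw [mul_comm, Complex.exp_mul_I]
    have e2 : Complex.exp (-(Complex.I * (ζ x : ℂ)))
        = Complex.cos ((ζ x : ℝ) : ℂ) - Complex.sin ((ζ x : ℝ) : ℂ) * Complex.I := by
      rw [show -(Complex.I * ((ζ x : ℝ) : ℂ)) = (-((ζ x : ℝ) : ℂ)) * Complex.I by ring,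
        Complex.exp_mul_I, Complex.cos_neg, Complex.sin_neg]
      ring
    rw [hP x hx, Pm]
    ext i j
    fin_cases i <;> fin_cases j
    · simp
    · simp
    · simp only [Fin.zero_eta, Fin.mk_one, Matrix.of_apply, Matrix.cons_val', Matrix.cons_val_zero,
        Matrix.cons_val_one, Matrix.head_cons, Matrix.head_fin_const, Matrix.empty_val',
        Matrix.cons_val_fin_one]
      rw [e1, Complex.ofReal_cos, Complex.ofReal_mul, Complex.ofReal_sin]
      linear_combination hcosC
    · simp only [Fin.zero_eta, Fin.mk_one, Matrix.of_apply, Matrix.cons_val', Matrix.cons_val_zero,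
        Matrix.cons_val_one, Matrix.head_cons, Matrix.head_fin_const, Matrix.empty_val',
        Matrix.cons_val_fin_one]
      rw [e2, Complex.ofReal_cos, Complex.ofReal_mul, Complex.ofReal_sin]
      linear_combination hcosC
  -- determinant claims
  have hdet : ∀ x : ℤ, (r : ℤ) ≤ |x| →
      (P x).det = -2 * Complex.I * α x * (ρ x : ℂ) * (Real.sin (ζ x) : ℂ) ∧ (P x).det ≠ 0 := by
    intro x hx
    obtain ⟨hmem, hcos, hsin'⟩ := hζ x hx
    have hde : (P x).det = -2 * Complex.I * α x * (ρ x : ℂ) * (Real.sin (ζ x) : ℂ) := by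
      rw [hPm x hx, det_Pm]
      push_cast
      ring
    refine ⟨hde, ?_⟩
    rw [hde]
    have ha : α x ≠ 0 := by
      intro h; have := h01 x; rw [h] at this; simp at this
    have hs : (0:ℝ) < Real.sin (ζ x) := lt_of_lt_of_le hε'0 hsin'
    apply mul_ne_zero
    apply mul_ne_zero
    apply mul_ne_zero
    · norm_num
    · exact ha
    · exact_mod_cast (hρpos x).ne'
    · exact_mod_cast hs.ne'
  refine ⟨hdet, ?_⟩
  -- uniform lower bounds
  obtain ⟨cα, hcαpos, hcα⟩ := exists_lb (fun x => ‖α x‖) h01 ‖αp‖ ‖αm‖ h0p (hpm ▸ h0p)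
    htop.norm hbot.norm
  obtain ⟨cβ, hcβpos, hcβ⟩ := exists_lb (fun x => 1 - ‖α x‖) (fun x => sub_pos.mpr (h02 x))
    (1 - ‖αp‖) (1 - ‖αm‖) (by linarith) (by rw [← hpm]; linarith)
    (tendsto_const_nhds.sub htop.norm) (tendsto_const_nhds.sub hbot.norm)
  set ρmin : ℝ := Real.sqrt cβ with hρmin_def
  have hρminpos : 0 < ρmin := Real.sqrt_pos.mpr hcβpos
  have hρmin : ∀ x : ℤ, ρmin ≤ ρ x := by
    intro x
    rw [hρ x, hρmin_def]
    apply Real.sqrt_le_sqrt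
    have := hcβ x
    nlinarith [hαnn x, h02 x]
  set tmin : ℝ := ρmin * ε' with htmin_def
  have htminpos : 0 < tmin := mul_pos hρminpos hε'0
  have ht_lb : ∀ x : ℤ, (r : ℤ) ≤ |x| → tmin ≤ ρ x * Real.sin (ζ x) := by
    intro x hx
    exact mul_le_mul (hρmin x) (hζ x hx).2.2 hε'0.le (hρpos x).le
  have ht_ub : ∀ x : ℤ, (r : ℤ) ≤ |x| → ρ x * Real.sin (ζ x) ≤ 1 := by
    intro x hx
    have h1 := Real.sin_le_one (ζ x)
    have h2 := hρ1 x
    nlinarith [hρpos x, (hζ x hx).2.2, hε'0]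
  -- squares of t
  have htsq : ∀ x : ℤ, (r : ℤ) ≤ |x| →
      (ρ x * Real.sin (ζ x)) ^ 2 = 1 - ‖α x‖ ^ 2 - (Real.cos lam) ^ 2 := by
    intro x hx
    have hcos := (hζ x hx).2.1
    have h1 := hρsq x
    have h2 := Real.sin_sq_add_cos_sq (ζ x)
    linear_combination h1 - (ρ x * Real.cos (ζ x) + Real.cos lam) * hcos + (ρ x) ^ 2 * h2
  -- the per-site bound
  set C : ℝ := (2 / (cα * tmin)) * (3 + 1 / tmin) with hC_def
  have hCpos : 0 < C := by positivity
  have hper : ∀ x : ℤ, (r : ℤ) ≤ |x| → (r : ℤ) ≤ |x + 1| →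
      matOpNorm ((P (x + 1))⁻¹ * P x - 1) ≤ C * ‖α (x + 1) - α x‖ := by
    intro x hx hx1
    set t : ℝ := ρ x * Real.sin (ζ x) with ht_def
    set t' : ℝ := ρ (x + 1) * Real.sin (ζ (x + 1)) with ht'_def
    have htl := ht_lb x hx
    have ht'l := ht_lb (x + 1) hx1
    have ht'u := ht_ub (x + 1) hx1
    have ha' : α (x + 1) ≠ 0 := by
      intro h; have := h01 (x + 1); rw [h] at this; simp at this
    have ht'pos : 0 < t' := lt_of_lt_of_le htminpos ht'l
    have ht'0 : t' ≠ 0 := ht'pos.ne'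
    have htd : |t - t'| ≤ ‖α (x + 1) - α x‖ / tmin := by
      apply t_diff tmin t t' htminpos htl ht'l
      have he : 2 * tmin * (‖α (x + 1) - α x‖ / tmin) = 2 * ‖α (x + 1) - α x‖ := by
        field_simp
      rw [he]
      have h1 := htsq x hx
      have h2 := htsq (x + 1) hx1
      have h3 : t ^ 2 - t' ^ 2 = ‖α (x + 1)‖ ^ 2 - ‖α x‖ ^ 2 := by
        rw [ht_def, ht'_def, h1, h2]; ring
      rw [h3]
      exact sq_diff_le _ _ _ (hαnn _) (h02 _).le (hαnn _) (h02 _).le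
        (abs_norm_sub_norm_le _ _)
    rw [hPm x hx, hPm (x + 1) hx1]
    refine (key_bound lam (α x) (α (x + 1)) t t' ha' ht'0).trans ?_
    have habs' : |t'| = t' := abs_of_pos ht'pos
    have hδ : ‖α x - α (x + 1)‖ = ‖α (x + 1) - α x‖ := norm_sub_rev _ _
    rw [habs', hδ]
    have h1 : 2 / (‖α (x + 1)‖ * t') ≤ 2 / (cα * tmin) := by
      apply div_le_div_of_nonneg_left (by norm_num) (mul_pos hcαpos htminpos)
      exact mul_le_mul (hcα (x + 1)) ht'l htminpos.le (hαnn (x + 1))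
    have h2 : (2 + t') * ‖α (x + 1) - α x‖ + ‖α (x + 1)‖ * |t - t'|
        ≤ (3 + 1 / tmin) * ‖α (x + 1) - α x‖ := by
      have hn1 : ‖α (x + 1)‖ ≤ 1 := (h02 _).le
      have hd2 : ‖α (x + 1)‖ * |t - t'| ≤ ‖α (x + 1) - α x‖ / tmin := by
        calc ‖α (x + 1)‖ * |t - t'| ≤ 1 * (‖α (x + 1) - α x‖ / tmin) :=
              mul_le_mul hn1 htd (abs_nonneg _) zero_le_one
          _ = ‖α (x + 1) - α x‖ / tmin := one_mul _
      have htu : t' ≤ 1 := ht'u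
      have hδnn : (0:ℝ) ≤ ‖α (x + 1) - α x‖ := norm_nonneg _
      have : (3 + 1 / tmin) * ‖α (x + 1) - α x‖
          = 3 * ‖α (x + 1) - α x‖ + ‖α (x + 1) - α x‖ / tmin := by ring
      rw [this]
      nlinarith [hd2, hδnn, htu, ht'pos]
    have hnn2 : (0:ℝ) ≤ (2 + t') * ‖α (x + 1) - α x‖ + ‖α (x + 1)‖ * |t - t'| :=
      add_nonneg (mul_nonneg (by linarith) (norm_nonneg _))
        (mul_nonneg (norm_nonneg _) (abs_nonneg _))
    calc (2 / (‖α (x + 1)‖ * t')) * ((2 + t') * ‖α (x + 1) - α x‖ + ‖α (x + 1)‖ * |t - t'|)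
        ≤ (2 / (cα * tmin)) * ((3 + 1 / tmin) * ‖α (x + 1) - α x‖) :=
          mul_le_mul h1 h2 hnn2 (by positivity)
      _ = C * ‖α (x + 1) - α x‖ := by rw [hC_def]; ring
  -- assemble
  have hr0 : (0:ℤ) ≤ (r : ℤ) := Int.natCast_nonneg r
  have habs1 : ∀ x : ℤ, (r : ℤ) ≤ x → (r : ℤ) ≤ |x| := fun x h => le_trans h (le_abs_self x)
  have habs2 : ∀ x : ℤ, (r : ℤ) ≤ x → (r : ℤ) ≤ |x + 1| := fun x h =>
    le_trans (by linarith) (le_abs_self (x + 1))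
  have habs3 : ∀ x : ℤ, x ≤ -(r : ℤ) - 1 → (r : ℤ) ≤ |x| := fun x h =>
    le_trans (by linarith) (neg_le_abs x)
  have habs4 : ∀ x : ℤ, x ≤ -(r : ℤ) - 1 → (r : ℤ) ≤ |x + 1| := fun x h =>
    le_trans (by linarith) (neg_le_abs (x + 1))
  set f1 : ℤ → ℝ :=
    fun x => if (r : ℤ) ≤ x then matOpNorm ((P (x + 1))⁻¹ * P x - 1) else 0 with hf1_def
  set f2 : ℤ → ℝ :=
    fun x => if x ≤ -(r : ℤ) - 1 then matOpNorm ((P (x + 1))⁻¹ * P x - 1) else 0 with hf2_def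
  set g : ℤ → ℝ := fun x => C * ‖α (x + 1) - α x‖ with hg_def
  have hg : Summable g := hsum.mul_left C
  have hf1nn : ∀ x, 0 ≤ f1 x := by
    intro x
    by_cases h : (r : ℤ) ≤ x <;> simp [hf1_def, h, matOpNorm_nonneg]
  have hf2nn : ∀ x, 0 ≤ f2 x := by
    intro x
    by_cases h : x ≤ -(r : ℤ) - 1 <;> simp only [hf2_def, h, ↓reduceIte, le_refl, matOpNorm_nonneg]
  have hf1le : ∀ x, f1 x ≤ g x := by
    intro x
    by_cases h : (r : ℤ) ≤ x
    · simpa [hf1_def, h, hg_def] using hper x (habs1 x h) (habs2 x h)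
    · simp only [hf1_def, h, if_neg, hg_def]
      positivity
  have hf2le : ∀ x, f2 x ≤ g x := by
    intro x
    by_cases h : x ≤ -(r : ℤ) - 1
    · simpa only [hf2_def, h, ↓reduceIte, hg_def] using hper x (habs3 x h) (habs4 x h)
    · simp only [hf2_def, h, if_neg, hg_def]
      positivity
  have hf1s : Summable f1 := Summable.of_nonneg_of_le hf1nn hf1le hg
  have hf2s : Summable f2 := Summable.of_nonneg_of_le hf2nn hf2le hg
  have hcomb : ∀ x, f1 x + f2 x ≤ g x := by
    intro x
    by_cases h : (r : ℤ) ≤ x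
    · have h2 : ¬(x ≤ -(r : ℤ) - 1) := by omega
      have hz : f2 x = 0 := by simp only [hf2_def, h2, ↓reduceIte]
      rw [hz, add_zero]
      exact hf1le x
    · have hz : f1 x = 0 := by simp [hf1_def, h]
      rw [hz, zero_add]
      exact hf2le x
  refine ⟨C, hCpos, hf1s, hf2s, ?_⟩
  calc (∑' x, f1 x) + (∑' x, f2 x) = ∑' x, (f1 x + f2 x) := (hf1s.tsum_add hf2s).symm
    _ ≤ ∑' x, g x := Summable.tsum_le_tsum hcomb (hf1s.add hf2s) hg
    _ = C * ∑' x, ‖α (x + 1) - α x‖ := tsum_mul_left
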